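/- For positive invertible operators ρ and σ on a finite-dimensional Hilbert space and q ∈ [0,1), T_q(ρ||σ) = 0 if and only if ρ = σ. -/

import Mathlib

open Matrix
open scoped ComplexOrder

/-- Real power of a Hermitian matrix via its spectral decomposition
(defined to be `0` on non-Hermitian matrices). -/
noncomputable def mpow {d : ℕ} (A : Matrix (Fin d) (Fin d) ℂ) (r : ℝ) :
    Matrix (Fin d) (Fin d) ℂ :=
  if hA : A.IsHermitian then
    (hA.eigenvectorUnitary : Matrix (Fin d) (Fin d) ℂ) *
      Matrix.diagonal (fun i => ((hA.eigenvalues i ^ r : ℝ) : ℂ)) *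
      star (hA.eigenvectorUnitary : Matrix (Fin d) (Fin d) ℂ)
  else 0

/-- The Tsallis relative operator entropy
`T_q(ρ‖σ) = (ρ^{1/2} (ρ^{-1/2} σ ρ^{-1/2})^{1-q} ρ^{1/2} - ρ)/(1-q)`. -/
noncomputable def Tq {d : ℕ} (ρ σ : Matrix (Fin d) (Fin d) ℂ) (q : ℝ) :
    Matrix (Fin d) (Fin d) ℂ :=
  (((1 - q : ℝ) : ℂ))⁻¹ •
    (mpow ρ (1/2) * mpow (mpow ρ (-(1/2)) * σ * mpow ρ (-(1/2))) (1 - q) * mpow ρ (1/2) - ρ)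



section Aux

variable {d : ℕ} {A : Matrix (Fin d) (Fin d) ℂ}

lemma mpow_def (hA : A.IsHermitian) (r : ℝ) :
    mpow A r = (hA.eigenvectorUnitary : Matrix (Fin d) (Fin d) ℂ) *
      Matrix.diagonal (fun i => ((hA.eigenvalues i ^ r : ℝ) : ℂ)) *
      star (hA.eigenvectorUnitary : Matrix (Fin d) (Fin d) ℂ) := dif_pos hA

lemma unit_star_mul (hA : A.IsHermitian) :
    star (hA.eigenvectorUnitary : Matrix (Fin d) (Fin d) ℂ) *
      (hA.eigenvectorUnitary : Matrix (Fin d) (Fin d) ℂ) = 1 :=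
  Matrix.mem_unitaryGroup_iff'.mp hA.eigenvectorUnitary.2

lemma unit_mul_star (hA : A.IsHermitian) :
    (hA.eigenvectorUnitary : Matrix (Fin d) (Fin d) ℂ) *
      star (hA.eigenvectorUnitary : Matrix (Fin d) (Fin d) ℂ) = 1 :=
  Matrix.mem_unitaryGroup_iff.mp hA.eigenvectorUnitary.2

lemma conjU_eq_one_iff (hA : A.IsHermitian) (B : Matrix (Fin d) (Fin d) ℂ) :
    (hA.eigenvectorUnitary : Matrix (Fin d) (Fin d) ℂ) * B *
      star (hA.eigenvectorUnitary : Matrix (Fin d) (Fin d) ℂ) = 1 ↔ B = 1 := by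
  set U := (hA.eigenvectorUnitary : Matrix (Fin d) (Fin d) ℂ) with hU
  constructor
  · intro h
    calc B = (star U * U) * B * (star U * U) := by rw [unit_star_mul hA]; simp
      _ = star U * (U * B * star U) * U := by simp only [mul_assoc]
      _ = 1 := by rw [h, mul_one, unit_star_mul hA]
  · rintro rfl
    rw [mul_one]
    exact unit_mul_star hA

lemma mpow_mul_mpow (hA : A.PosDef) (r s : ℝ) :
    mpow A r * mpow A s = mpow A (r + s) := by
  rw [mpow_def hA.1, mpow_def hA.1, mpow_def hA.1]
  set U := (hA.1.eigenvectorUnitary : Matrix (Fin d) (Fin d) ℂ) with hU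
  have key : star U * (U * ((Matrix.diagonal fun i => ((hA.1.eigenvalues i ^ s : ℝ) : ℂ)) * star U))
      = (Matrix.diagonal fun i => ((hA.1.eigenvalues i ^ s : ℝ) : ℂ)) * star U := by
    rw [← mul_assoc, ← mul_assoc, unit_star_mul hA.1, one_mul]
  have hfun : (fun i => ((hA.1.eigenvalues i ^ r : ℝ) : ℂ) * ((hA.1.eigenvalues i ^ s : ℝ) : ℂ))
      = fun i => ((hA.1.eigenvalues i ^ (r + s) : ℝ) : ℂ) := funext fun i => by
    rw [← Complex.ofReal_mul, ← Real.rpow_add (hA.eigenvalues_pos i)]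
  simp only [mul_assoc]
  rw [key, ← mul_assoc (Matrix.diagonal _), diagonal_mul_diagonal, hfun]

lemma mpow_zero (hA : A.IsHermitian) : mpow A 0 = 1 := by
  rw [mpow_def hA]
  simp [Real.rpow_zero, unit_mul_star hA]

lemma mpow_one (hA : A.IsHermitian) : mpow A 1 = A := by
  conv_rhs => rw [hA.spectral_theorem]
  rw [mpow_def hA]
  simp [Real.rpow_one, Function.comp_def]

lemma mpow_isHermitian (hA : A.IsHermitian) (r : ℝ) : (mpow A r).IsHermitian := by
  rw [mpow_def hA]
  apply Matrix.isHermitian_mul_mul_conjTranspose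
  exact Matrix.isHermitian_diagonal_of_self_adjoint _
    (funext fun i => Complex.conj_ofReal _)

lemma diag_rpow_posDef (hA : A.PosDef) (r : ℝ) :
    (Matrix.diagonal (fun i => ((hA.1.eigenvalues i ^ r : ℝ) : ℂ))).PosDef :=
  Matrix.PosDef.diagonal fun i => by
    rw [Complex.zero_lt_real]
    exact Real.rpow_pos_of_pos (hA.eigenvalues_pos i) r

lemma posDef_conj {B σ : Matrix (Fin d) (Fin d) ℂ} (hσ : σ.PosDef) (hB : IsUnit B) :
    (B * σ * Bᴴ).PosDef := by
  refine Matrix.PosDef.of_dotProduct_mulVec_pos (Matrix.isHermitian_mul_mul_conjTranspose B hσ.1) fun x hx => ?_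
  have hBt : IsUnit Bᴴ := by
    simpa using hB.map (conjTransposeRingEquiv (Fin d) ℂ).toRingHom
  have hy : Bᴴ *ᵥ x ≠ 0 := by
    intro h
    apply hx
    have hinj := Matrix.mulVec_injective_iff_isUnit.mpr hBt
    exact hinj (h.trans (Matrix.mulVec_zero Bᴴ).symm)
  have hpos := hσ.dotProduct_mulVec_pos hy
  calc (0:ℂ) < star (Bᴴ *ᵥ x) ⬝ᵥ (σ *ᵥ (Bᴴ *ᵥ x)) := hpos
    _ = star x ⬝ᵥ ((B * σ * Bᴴ) *ᵥ x) := by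
        rw [star_mulVec, conjTranspose_conjTranspose, ← Matrix.dotProduct_mulVec,
          Matrix.mulVec_mulVec, Matrix.mulVec_mulVec]

lemma mpow_posDef (hA : A.PosDef) (r : ℝ) : (mpow A r).PosDef := by
  rw [mpow_def hA.1]
  exact posDef_conj (diag_rpow_posDef hA r) ⟨Unitary.toUnits hA.1.eigenvectorUnitary, rfl⟩

lemma rpow_eq_one_iff' {x r : ℝ} (hx : 0 < x) (hr : 0 < r) : x ^ r = 1 ↔ x = 1 := by
  constructor
  · intro h
    rcases lt_trichotomy x 1 with h1 | h1 | h1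
    · have h2 := Real.rpow_lt_rpow hx.le h1 hr
      rw [Real.one_rpow, h] at h2
      linarith
    · exact h1
    · have h2 := Real.rpow_lt_rpow (by norm_num : (0:ℝ) ≤ 1) h1 hr
      rw [Real.one_rpow, h] at h2
      linarith
  · rintro rfl
    exact Real.one_rpow r

lemma mpow_eq_one_iff (hA : A.PosDef) {r : ℝ} (hr : 0 < r) : mpow A r = 1 ↔ A = 1 := by
  rw [mpow_def hA.1, conjU_eq_one_iff hA.1]
  constructor
  · intro h
    have heig : ∀ i, hA.1.eigenvalues i = 1 := fun i => by
      have h2 : (Matrix.diagonal fun i => ((hA.1.eigenvalues i ^ r : ℝ) : ℂ)) i i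
          = (1 : Matrix (Fin d) (Fin d) ℂ) i i := by rw [h]
      simp only [Matrix.diagonal_apply_eq, Matrix.one_apply_eq] at h2
      rw [show (1:ℂ) = ((1:ℝ):ℂ) by norm_num, Complex.ofReal_inj] at h2
      exact (rpow_eq_one_iff' (hA.eigenvalues_pos i) hr).mp h2
    conv_lhs => rw [hA.1.spectral_theorem, Unitary.conjStarAlgAut_apply]
    rw [show Matrix.diagonal (RCLike.ofReal ∘ hA.1.eigenvalues) = (1 : Matrix (Fin d) (Fin d) ℂ) by
      rw [show (RCLike.ofReal ∘ hA.1.eigenvalues : Fin d → ℂ) = fun _ => (1:ℂ) from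
        funext fun i => by simp [heig i]]
      exact Matrix.diagonal_one]
    rw [mul_one]
    exact unit_mul_star hA.1
  · intro hA1
    have h1 : Matrix.diagonal (RCLike.ofReal ∘ hA.1.eigenvalues) = (1 : Matrix (Fin d) (Fin d) ℂ) := by
      apply (conjU_eq_one_iff hA.1 _).mp
      rw [← Unitary.conjStarAlgAut_apply (S := ℂ), ← hA.1.spectral_theorem]
      exact hA1
    have heig : ∀ i, hA.1.eigenvalues i = 1 := fun i => by
      have h2 : (Matrix.diagonal (RCLike.ofReal ∘ hA.1.eigenvalues)) i i
          = (1 : Matrix (Fin d) (Fin d) ℂ) i i := by rw [h1]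
      simp only [Matrix.diagonal_apply_eq, Matrix.one_apply_eq, Function.comp_apply] at h2
      have h3 : ((hA.1.eigenvalues i : ℝ) : ℂ) = 1 := h2
      exact_mod_cast h3
    rw [show (fun i => ((hA.1.eigenvalues i ^ r : ℝ) : ℂ)) = fun _ => (1:ℂ) from
      funext fun i => by simp [heig i, Real.one_rpow]]
    exact Matrix.diagonal_one


end Aux

theorem tsallis_operator_entropy_eq_zero_iff {d : ℕ} (ρ σ : Matrix (Fin d) (Fin d) ℂ)
    (hρ : ρ.PosDef) (hσ : σ.PosDef) (q : ℝ) (hq0 : 0 ≤ q) (hq1 : q < 1) :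
    Tq ρ σ q = 0 ↔ ρ = σ := by
  have hq : (0:ℝ) < 1 - q := by linarith
  set M := mpow ρ (1/2) with hM
  set N := mpow ρ (-(1/2)) with hN
  have hMN : M * N = 1 := by
    rw [hM, hN, mpow_mul_mpow hρ, show (1/2 + -(1/2) : ℝ) = 0 by ring, mpow_zero hρ.1]
  have hNM : N * M = 1 := by
    rw [hM, hN, mpow_mul_mpow hρ, show (-(1/2) + 1/2 : ℝ) = 0 by ring, mpow_zero hρ.1]
  have hMM : M * M = ρ := by
    rw [hM, mpow_mul_mpow hρ, show (1/2 + 1/2 : ℝ) = 1 by ring, mpow_one hρ.1]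
  have hNunit : IsUnit N := ⟨⟨N, M, hNM, hMN⟩, rfl⟩
  have hNherm : Nᴴ = N := (mpow_isHermitian hρ.1 _).eq
  have hX : (N * σ * N).PosDef := by
    have := posDef_conj hσ hNunit
    rwa [hNherm] at this
  have hc : (((1 - q : ℝ) : ℂ))⁻¹ ≠ 0 := by
    apply inv_ne_zero
    exact_mod_cast (by positivity : (0:ℝ) < 1 - q).ne'
  have key : ∀ Y : Matrix (Fin d) (Fin d) ℂ, M * Y * M = ρ ↔ Y = 1 := by
    intro Y
    constructor
    · intro h
      calc Y = (N * M) * Y * (M * N) := by rw [hNM, hMN, one_mul, mul_one]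
        _ = N * (M * Y * M) * N := by simp only [mul_assoc]
        _ = N * ρ * N := by rw [h]
        _ = (N * M) * (M * N) := by rw [← hMM]; simp only [mul_assoc]
        _ = 1 := by rw [hNM, hMN, one_mul]
    · rintro rfl
      rw [mul_one]
      exact hMM
  have hXiff : N * σ * N = 1 ↔ ρ = σ := by
    constructor
    · intro h
      have h2 : M * (N * σ * N) * M = M * 1 * M := by rw [h]
      rw [mul_one, hMM] at h2
      calc ρ = M * (N * σ * N) * M := h2.symm
        _ = (M * N) * σ * (N * M) := by simp only [mul_assoc]
        _ = σ := by rw [hMN, hNM, one_mul, mul_one]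
    · rintro rfl
      calc N * ρ * N = N * (M * M) * N := by rw [hMM]
        _ = (N * M) * (M * N) := by simp only [mul_assoc]
        _ = 1 := by rw [hNM, hMN, one_mul]
  rw [Tq, smul_eq_zero, or_iff_right hc, sub_eq_zero, ← hM, ← hN,
    key _, mpow_eq_one_iff hX hq, hXiff]
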